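/- Let X be a Banach space and a, b ∈ X. Then ‖a − b‖ equals the supremum, over all bounded Lipschitz functions f : X → ℝ which are everywhere Fréchet differentiable and have strictly positive Lipschitz constant, of |f(a) − f(b)| divided by the (best) Lipschitz constant of f; and this supremum also equals the analogous supremum taken over all bounded Lipschitz everywhere Gâteaux differentiable f : X → ℝ with strictly positive Lipschitz constant. -/

import Mathlib

open Filter Metric Topology

section Defs
variable {X Z : Type*} [NormedAddCommGroup X] [NormedSpace ℝ X]
  [NormedAddCommGroup Z] [NormedSpace ℝ Z]

/-- `A` is the Gâteaux derivative of `f` at `x`. -/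
def HasGateauxDerivAt (f : X → Z) (A : X →L[ℝ] Z) (x : X) : Prop :=
  ∀ h : X, Tendsto (fun t : ℝ => t⁻¹ • (f (x + t • h) - f x)) (𝓝[≠] (0 : ℝ)) (𝓝 (A h))

/-- `f` is Gâteaux differentiable at `x`. -/
def GateauxDifferentiableAt (f : X → Z) (x : X) : Prop :=
  ∃ A : X →L[ℝ] Z, HasGateauxDerivAt f A x
end Defs

/-- The best Lipschitz constant of `f`: the supremum of `|f x - f x'| / ‖x - x'‖` over
all pairs (the quotient is interpreted as `0` when `x = x'`). -/
noncomputable def bestLip {X : Type*} [NormedAddCommGroup X] (f : X → ℝ) : ℝ :=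
  sSup (Set.range fun p : X × X => |f p.1 - f p.2| / ‖p.1 - p.2‖)


open MeasureTheory in

lemma exists_truncation (M : ℝ) (hM : 0 ≤ M) :
    ∃ φ : ℝ → ℝ, (∃ C, ∀ t, |φ t| ≤ C) ∧ LipschitzWith 1 φ ∧ Differentiable ℝ φ ∧
      ∀ t, |t| ≤ M → φ t = t := by
  have h1 : (0:ℝ) < M + 1 := by linarith
  have h2 : M + 1 < M + 2 := by linarith
  let β : ContDiffBump (0:ℝ) := ⟨M+1, M+2, h1, h2⟩
  have hβc : Continuous β := β.continuous
  have hβint : Integrable (β : ℝ → ℝ) := hβc.integrable_of_hasCompactSupport β.hasCompactSupport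
  refine ⟨fun t => ∫ s in (0:ℝ)..t, β s, ⟨∫ s, β s, ?_⟩, ?_, ?_, ?_⟩
  · intro t
    show |∫ s in (0:ℝ)..t, β s| ≤ ∫ s, β s
    rcases le_total 0 t with ht | ht
    · rw [intervalIntegral.integral_of_le ht, abs_of_nonneg
        (setIntegral_nonneg measurableSet_Ioc fun s _ => β.nonneg)]
      exact setIntegral_le_integral hβint (Filter.Eventually.of_forall fun s => β.nonneg)
    · rw [intervalIntegral.integral_of_ge ht, abs_neg, abs_of_nonneg
        (setIntegral_nonneg measurableSet_Ioc fun s _ => β.nonneg)]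
      exact setIntegral_le_integral hβint (Filter.Eventually.of_forall fun s => β.nonneg)
  · refine lipschitzWith_of_nnnorm_deriv_le
      (fun t => (hβc.integral_hasStrictDerivAt 0 t).hasDerivAt.differentiableAt) fun t => ?_
    rw [Continuous.deriv_integral _ hβc]
    rw [← NNReal.coe_le_coe, coe_nnnorm, Real.norm_eq_abs, NNReal.coe_one,
      abs_of_nonneg β.nonneg]
    exact β.le_one
  · exact fun t => (hβc.integral_hasStrictDerivAt 0 t).hasDerivAt.differentiableAt
  · intro t ht
    obtain ⟨ht1, ht2⟩ := abs_le.1 ht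
    have heq : ∀ s ∈ Set.uIcc (0:ℝ) t, β s = 1 := by
      intro s hs
      refine β.one_of_mem_closedBall ?_
      rw [mem_closedBall, dist_zero_right, Real.norm_eq_abs]
      have hs1 : -M ≤ s := le_trans (le_inf (by linarith) ht1) hs.1
      have hs2 : s ≤ M := le_trans hs.2 (sup_le hM ht2)
      show |s| ≤ M + 1
      rw [abs_le]; constructor <;> linarith
    show (∫ s in (0:ℝ)..t, β s) = t
    rw [intervalIntegral.integral_congr (g := fun _ => (1:ℝ)) heq]
    simp

lemma gateaux_of_differentiable {X : Type*} [NormedAddCommGroup X] [NormedSpace ℝ X]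
    {f : X → ℝ} (hf : Differentiable ℝ f) (x : X) : GateauxDifferentiableAt f x := by
  refine ⟨fderiv ℝ f x, fun h => ?_⟩
  have h1 : HasDerivAt (fun t : ℝ => x + t • h) h 0 := by
    simpa using ((hasDerivAt_id (0:ℝ)).smul_const h).const_add x
  have h2 : HasDerivAt (fun t : ℝ => f (x + t • h)) (fderiv ℝ f x h) 0 := by
    have := (hf (x + (0:ℝ) • h)).hasFDerivAt.comp_hasDerivAt 0 h1
    simpa [Function.comp_def] using this
  have h3 := hasDerivAt_iff_tendsto_slope.1 h2
  simpa [slope_fun_def, Function.comp] using h3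

lemma quot_le_lip {X : Type*} [NormedAddCommGroup X] {f : X → ℝ} {K : NNReal}
    (hf : LipschitzWith K f) (p : X × X) : |f p.1 - f p.2| / ‖p.1 - p.2‖ ≤ (K : ℝ) := by
  rcases eq_or_ne p.1 p.2 with h | h
  · simp [h]
  · rw [div_le_iff₀ (norm_sub_pos_iff.2 h)]
    have := hf.dist_le_mul p.1 p.2
    simpa [Real.dist_eq, dist_eq_norm] using this

lemma key {X : Type*} [NormedAddCommGroup X] [NormedSpace ℝ X] [CompleteSpace X] (a b : X)
    (P : (X → ℝ) → Prop) (hP : ∀ f : X → ℝ, Differentiable ℝ f → P f)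
    (htr : ∀ M : ℝ, 0 ≤ M → ∃ φ : ℝ → ℝ, (∃ C, ∀ t, |φ t| ≤ C) ∧ LipschitzWith 1 φ ∧
      Differentiable ℝ φ ∧ ∀ t, |t| ≤ M → φ t = t) :
    ‖a - b‖ = sSup {r : ℝ | ∃ f : X → ℝ,
        (∃ C : ℝ, ∀ x, |f x| ≤ C) ∧ (∃ K : NNReal, LipschitzWith K f) ∧
        P f ∧ 0 < bestLip f ∧ r = |f a - f b| / bestLip f} := by
  set S := {r : ℝ | ∃ f : X → ℝ,
        (∃ C : ℝ, ∀ x, |f x| ≤ C) ∧ (∃ K : NNReal, LipschitzWith K f) ∧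
        P f ∧ 0 < bestLip f ∧ r = |f a - f b| / bestLip f} with hS
  have hub : ∀ r ∈ S, r ≤ ‖a - b‖ := by
    rintro r ⟨f, -, ⟨K, hK⟩, -, hL, rfl⟩
    have hbdd : BddAbove (Set.range fun p : X × X => |f p.1 - f p.2| / ‖p.1 - p.2‖) := by
      refine ⟨(K : ℝ), ?_⟩
      rintro r ⟨p, rfl⟩
      exact quot_le_lip hK p
    have h1 : |f a - f b| / ‖a - b‖ ≤ bestLip f := le_csSup hbdd ⟨(a, b), rfl⟩
    have h2 : |f a - f b| ≤ ‖a - b‖ * bestLip f := by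
      rcases eq_or_ne a b with h | h
      · simp [h]
      · rw [mul_comm]
        exact (div_le_iff₀ (norm_sub_pos_iff.2 h)).1 h1
    exact (div_le_iff₀ hL).2 h2
  rcases eq_or_ne a b with hab | hab
  · have hS0 : S ⊆ {0} := by
      rintro r ⟨f, -, -, -, hL, rfl⟩
      simp [hab, hL.ne']
    rcases S.eq_empty_or_nonempty with h | h
    · rw [h, Real.sSup_empty, hab, sub_self, norm_zero]
    · rw [(Set.Nonempty.subset_singleton_iff h).1 hS0, csSup_singleton, hab, sub_self, norm_zero]
  · have hx : a - b ≠ 0 := sub_ne_zero.2 hab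
    obtain ⟨g, hg1, hgx⟩ := exists_dual_vector ℝ (a - b) (norm_ne_zero_iff.2 hx)
    set M := max |g a| |g b| with hM
    have hM0 : 0 ≤ M := le_trans (abs_nonneg _) (le_max_left _ _)
    obtain ⟨φ, ⟨C, hC⟩, hφlip, hφdiff, hφid⟩ := htr M hM0
    set f : X → ℝ := fun x => φ (g x) with hf
    have hglip : LipschitzWith 1 g := by
      have hn : ‖g‖₊ = 1 := NNReal.coe_injective (by simp [hg1])
      simpa [hn] using g.lipschitz
    have hflip : LipschitzWith 1 f := by
      simpa [hf, Function.comp_def] using hφlip.comp hglip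
    have hfab : f a - f b = ‖a - b‖ := by
      rw [hf]
      simp only
      rw [hφid (g a) (le_max_left _ _), hφid (g b) (le_max_right _ _), ← map_sub]
      exact hgx
    have habs : |f a - f b| = ‖a - b‖ := by rw [hfab]; exact abs_of_nonneg (norm_nonneg _)
    have hbdd : BddAbove (Set.range fun p : X × X => |f p.1 - f p.2| / ‖p.1 - p.2‖) := by
      refine ⟨(1 : ℝ), ?_⟩
      rintro r ⟨p, rfl⟩
      simpa using quot_le_lip hflip p
    have hge : (1 : ℝ) ≤ bestLip f := by
      have : |f a - f b| / ‖a - b‖ = 1 := by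
        rw [habs, div_self (norm_ne_zero_iff.2 hx)]
      calc (1:ℝ) = |f a - f b| / ‖a - b‖ := this.symm
        _ ≤ bestLip f := le_csSup hbdd ⟨(a, b), rfl⟩
    have hle : bestLip f ≤ 1 := by
      refine csSup_le ⟨_, ⟨(a, b), rfl⟩⟩ ?_
      rintro r ⟨p, rfl⟩
      simpa using quot_le_lip hflip p
    have hbest : bestLip f = 1 := le_antisymm hle hge
    have hmem : ‖a - b‖ ∈ S := by
      refine ⟨f, ⟨C, fun x => hC (g x)⟩, ⟨1, hflip⟩,
        hP f (hφdiff.comp g.differentiable), by rw [hbest]; norm_num, ?_⟩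
      rw [hbest, habs, div_one]
    exact le_antisymm (le_csSup ⟨‖a - b‖, hub⟩ hmem) (csSup_le ⟨_, hmem⟩ hub)

/-- Let `X` be a Banach space and `a, b ∈ X`. Then `‖a - b‖` equals the
supremum over all bounded Lipschitz everywhere Fréchet differentiable `f : X → ℝ` with
strictly positive best Lipschitz constant of `|f a - f b| / bestLip f`, and also equals
the analogous supremum over all bounded Lipschitz everywhere Gâteaux differentiable `f`. -/
theorem norm_sub_eq_sup_over_smooth_functions
    {X : Type*} [NormedAddCommGroup X] [NormedSpace ℝ X] [CompleteSpace X]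
    (a b : X) :
    ‖a - b‖ = sSup {r : ℝ | ∃ f : X → ℝ,
        (∃ C : ℝ, ∀ x, |f x| ≤ C) ∧ (∃ K : NNReal, LipschitzWith K f) ∧
        Differentiable ℝ f ∧ 0 < bestLip f ∧ r = |f a - f b| / bestLip f} ∧
    ‖a - b‖ = sSup {r : ℝ | ∃ f : X → ℝ,
        (∃ C : ℝ, ∀ x, |f x| ≤ C) ∧ (∃ K : NNReal, LipschitzWith K f) ∧
        (∀ x, GateauxDifferentiableAt f x) ∧ 0 < bestLip f ∧ r = |f a - f b| / bestLip f} := by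
  constructor
  · exact key a b (Differentiable ℝ) (fun f h => h) exists_truncation
  · exact key a b (fun f => ∀ x, GateauxDifferentiableAt f x)
      (fun f hf x => gateaux_of_differentiable hf x) exists_truncation
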